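/- Let λ₁ ∈ ℂ \ {0} and let f, g, a, b, c, d ∈ ℂ. Set Δ := conj(λ₁)|f|² + λ₁|g|² and assume Δ ≠ 0. Suppose that T(λ₁)·(f, g)ᵀ = (0,0)ᵀ and T(conj(λ₁))·(−conj(g), conj(f))ᵀ = (0,0)ᵀ, where T(λ) is the 2×2 matrix with entries T(λ)₁₁ = λ + a|λ₁|²/λ, T(λ)₁₂ = b, T(λ)₂₁ = c, T(λ)₂₂ = dλ + |λ₁|²/λ. Then a = −conj(Δ)/Δ, b = −(λ₁² − conj(λ₁)²) f conj(g)/Δ, c = (λ₁² − conj(λ₁)²) conj(f) g/Δ, and d = −conj(Δ)/Δ. -/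

import Mathlib

open Complex ComplexConjugate

noncomputable section

/-- The one-fold Darboux matrix with parameter `lam1` and coefficients `a, b, c, d`. -/
def darbouxT (lam1 a b c d : ℂ) (lam : ℂ) : Matrix (Fin 2) (Fin 2) ℂ :=
  !![lam + a * (Complex.normSq lam1 : ℂ) / lam, b;
     c, d * lam + (Complex.normSq lam1 : ℂ) / lam]

/-- Coefficients of the Darboux matrix determined by the kernel conditions. -/
theorem darboux_coefficients
    (lam1 : ℂ) (hlam1 : lam1 ≠ 0) (f g a b c d : ℂ)
    (Δ : ℂ) (hΔdef : Δ = conj lam1 * (Complex.normSq f : ℂ) + lam1 * (Complex.normSq g : ℂ))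
    (hΔ : Δ ≠ 0)
    (h1 : Matrix.mulVec (darbouxT lam1 a b c d lam1) ![f, g] = 0)
    (h2 : Matrix.mulVec (darbouxT lam1 a b c d (conj lam1)) ![-(conj g), conj f] = 0) :
    a = -(conj Δ) / Δ ∧
    b = -((lam1 ^ 2 - (conj lam1) ^ 2) * f * conj g) / Δ ∧
    c = (lam1 ^ 2 - (conj lam1) ^ 2) * conj f * g / Δ ∧
    d = -(conj Δ) / Δ := by
  have hlc : (starRingEnd ℂ) lam1 ≠ 0 := by simpa using hlam1
  have e1 := congr_fun h1 0
  have e2 := congr_fun h1 1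
  have e3 := congr_fun h2 0
  have e4 := congr_fun h2 1
  simp [darbouxT, Matrix.mulVec, dotProduct, Fin.sum_univ_two] at e1 e2 e3 e4
  have hnl : (Complex.normSq lam1 : ℂ) = lam1 * conj lam1 := (Complex.mul_conj lam1).symm
  have hnf : (Complex.normSq f : ℂ) = f * conj f := (Complex.mul_conj f).symm
  have hng : (Complex.normSq g : ℂ) = g * conj g := (Complex.mul_conj g).symm
  rw [hnl] at e1 e2 e3 e4
  rw [hnf, hng] at hΔdef
  have hΔc : conj Δ = lam1 * (f * conj f) + conj lam1 * (g * conj g) := by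
    rw [hΔdef]; simp; ring
  field_simp at e1 e2 e3 e4 ⊢
  refine ⟨?_, ?_, ?_, ?_⟩
  · have key : lam1 * conj lam1 * (a * Δ) = lam1 * conj lam1 * (-(conj Δ)) := by
      linear_combination (lam1 * conj lam1 * a) * hΔdef + (lam1 * conj lam1) * hΔc +
        (lam1 * conj lam1 * conj f) * e1 - (lam1 * conj lam1 * g) * e3
    exact mul_left_cancel₀ (mul_ne_zero hlam1 hlc) key
  · linear_combination b * hΔdef + conj lam1 * f * e3 + lam1 * conj g * e1
  · linear_combination c * hΔdef + conj lam1 * conj f * e2 - lam1 * g * e4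
  · linear_combination d * hΔdef + hΔc + conj g * e2 + f * e4
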